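/- arXiv:2210.06247 — 2 statements merged into one kernel-verified Lean document; each statement's English description precedes it below -/
import Mathlib

section
/- If F is the disjoint union of two digraphs F₁ and F₂, then mader(F) ≤ mader(F₁) + mader(F₂). -/
/-- A digraph (given by its adjacency relation) is acyclic if it contains no
directed cycle (a nonempty closed directed walk with pairwise distinct vertices). -/
def IsAcyclic {V : Type} (D : V → V → Prop) : Prop :=
  ∀ (v : V) (l : List V), (v :: l).Nodup → List.Chain D v (l ++ [v]) → False

/-- The subdigraph induced on a vertex set `S` is acyclic. -/
def AcyclicOn {V : Type} (D : V → V → Prop) (S : Set V) : Prop :=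
  IsAcyclic (fun a b => a ∈ S ∧ b ∈ S ∧ D a b)

/-- `D` admits an acyclic `k`-coloring: each color class induces an acyclic subdigraph. -/
def DichromLE {V : Type} (D : V → V → Prop) (k : ℕ) : Prop :=
  ∃ c : V → Fin k, ∀ i : Fin k, AcyclicOn D {v | c v = i}

/-- The dichromatic number of a digraph. -/
noncomputable def dichrom {V : Type} (D : V → V → Prop) : ℕ :=
  sInf {k | DichromLE D k}

/-- `D` contains a subdivision of `F`: an injective placement of the vertices of `F`
together with, for each arc of `F`, a directed path in `D` between the corresponding
branch vertices, all paths internally disjoint from each other and from the branch vertices. -/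
def ContainsSubdivision {U V : Type} (F : U → U → Prop) (D : V → V → Prop) : Prop :=
  ∃ (f : U → V) (p : ∀ u v, F u v → List V),
    Function.Injective f ∧
    (∀ u v (h : F u v), List.Chain D (f u) (p u v h ++ [f v])) ∧
    (∀ u v (h : F u v), (f u :: (p u v h ++ [f v])).Nodup) ∧
    (∀ u v (h : F u v), ∀ w ∈ p u v h, ∀ x : U, w ≠ f x) ∧
    (∀ u v (h : F u v), ∀ u' v' (h' : F u' v'), (u, v) ≠ (u', v') →
      ∀ w ∈ p u v h, w ∉ p u' v' h')

/-- `mader F`: the least `k` such that every (finite) digraph with dichromatic number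
at least `k` contains a subdivision of `F`. -/
noncomputable def mader {U : Type} (F : U → U → Prop) : ℕ :=
  sInf {k | ∀ (V : Type) (_ : Fintype V) (D : V → V → Prop),
    k ≤ dichrom D → ContainsSubdivision F D}

/-- The restriction of a digraph to a vertex set. -/
def restrictRel {V : Type} (D : V → V → Prop) (S : Set V) : V → V → Prop :=
  fun a b => a ∈ S ∧ b ∈ S ∧ D a b

/-- A digraph is strongly connected if every vertex can reach every other by a directed path. -/
def StrongConnected {V : Type} (D : V → V → Prop) : Prop :=
  ∀ u v, Relation.ReflTransGen D u v

/-- `D` is `k`-dicritical: its dichromatic number is `k` and every proper subdigraph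
(a subset of vertices together with a subset of the arcs inside it) has dichromatic
number strictly less than `k`. -/
def Dicritical {V : Type} (D : V → V → Prop) (k : ℕ) : Prop :=
  dichrom D = k ∧
  ∀ (S : Set V) (A : V → V → Prop),
    (∀ a b, A a b → a ∈ S ∧ b ∈ S ∧ D a b) →
    ¬(S = Set.univ ∧ A = D) →
    dichrom (fun a b : S => A a b) < k

/-- The disjoint union of two digraphs. -/
def disjUnion {U W : Type} (F₁ : U → U → Prop) (F₂ : W → W → Prop) :
    U ⊕ W → U ⊕ W → Prop
  | Sum.inl a, Sum.inl b => F₁ a b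
  | Sum.inr a, Sum.inr b => F₂ a b
  | _, _ => False

noncomputable section MaderHelpers
open Classical

variable {V : Type}

/-- restriction of a digraph to a subtype -/
def subRel {V : Type} (D : V → V → Prop) (S : Set V) : S → S → Prop :=
  fun a b => D a.1 b.1

lemma isAcyclic_of_map {V V' : Type} {R : V → V → Prop} {R' : V' → V' → Prop}
    (e : V' → V) (he : Function.Injective e)
    (h : ∀ a b, R' a b → R (e a) (e b)) (hR : IsAcyclic R) : IsAcyclic R' := by
  intro v l hnd hch
  refine hR (e v) (l.map e) ?_ ?_
  · have : ((v :: l).map e).Nodup := hnd.map he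
    simpa using this
  · have := List.isChain_map_of_isChain e h hch
    simpa [List.Chain] using this

lemma chain_mem_of_chain {R : V → V → Prop} {P : V → Prop} (hmem : ∀ a b, R a b → P a ∧ P b) :
    ∀ (l : List V) (v : V), List.Chain R v l → ∀ x ∈ l, P x := by
  intro l
  induction l with
  | nil => intro v _ x hx; simp at hx
  | cons a l ih =>
    intro v hch x hx
    simp only [List.Chain, List.chain_cons] at hch
    rw [List.mem_cons] at hx
    rcases hx with hx | hx
    · subst hx; exact (hmem _ _ hch.1).2
    · exact ih a hch.2 x hx

lemma chain_pmap {R : V → V → Prop} {P : V → Prop} {R' : Subtype P → Subtype P → Prop}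
    (h : ∀ (a b : V) (ha : P a) (hb : P b), R a b → R' ⟨a, ha⟩ ⟨b, hb⟩) :
    ∀ (l : List V) (hl : ∀ x ∈ l, P x) (v : V) (hv : P v),
      List.Chain R v l → List.Chain R' ⟨v, hv⟩ (l.pmap (fun x hx => (⟨x, hx⟩ : Subtype P)) hl) := by
  intro l
  induction l with
  | nil => intro _ _ _ _; simp [List.Chain]
  | cons a l ih =>
    intro hl v hv hch
    simp only [List.Chain, List.chain_cons] at hch
    simp only [List.pmap, List.Chain, List.chain_cons]
    exact ⟨h _ _ _ _ hch.1, ih _ a _ hch.2⟩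

lemma isAcyclic_pull {R : V → V → Prop} {P : V → Prop}
    {R' : Subtype P → Subtype P → Prop}
    (hmem : ∀ a b, R a b → P a ∧ P b)
    (h : ∀ (a b : V) (ha : P a) (hb : P b), R a b → R' ⟨a, ha⟩ ⟨b, hb⟩)
    (hac : IsAcyclic R') : IsAcyclic R := by
  intro v l hnd hch
  have hv : P v := by
    cases hl : (l ++ [v]) with
    | nil => simp at hl
    | cons a t =>
      rw [hl] at hch; simp only [List.Chain, List.chain_cons] at hch
      exact (hmem _ _ hch.1).1
  have hall : ∀ x ∈ l ++ [v], P x := chain_mem_of_chain hmem _ _ hch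
  have hl : ∀ x ∈ l, P x := fun x hx => hall x (by simp [hx])
  refine hac ⟨v, hv⟩ (l.pmap (fun x hx => ⟨x, hx⟩) hl) ?_ ?_
  · have : ((⟨v, hv⟩ : Subtype P) :: l.pmap (fun x hx => (⟨x, hx⟩ : Subtype P)) hl).map
        Subtype.val = v :: l := by simp [List.map_pmap]
    exact List.Nodup.of_map Subtype.val (by rw [this]; exact hnd)
  · have hpe : (l.pmap (fun x hx => (⟨x, hx⟩ : Subtype P)) hl) ++ [⟨v, hv⟩] =
        (l ++ [v]).pmap (fun x hx => (⟨x, hx⟩ : Subtype P)) hall := by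
      rw [List.pmap_append]
      simp
    rw [hpe]
    exact chain_pmap h _ hall v hv hch

lemma dichromLE_mono {D : V → V → Prop} {k k' : ℕ} (hkk : k ≤ k')
    (h : DichromLE D k) : DichromLE D k' := by
  obtain ⟨c, hc⟩ := h
  refine ⟨fun v => (c v).castLE hkk, fun i => ?_⟩
  intro v l hnd hch
  have hv : (c v).castLE hkk = i := by
    cases hl : (l ++ [v]) with
    | nil => simp at hl
    | cons a t =>
      rw [hl] at hch; simp only [List.Chain, List.chain_cons] at hch
      exact hch.1.1
  have hik : (i : ℕ) < k := by
    rw [← hv]; exact (c v).2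
  refine hc ⟨i, hik⟩ v l hnd ?_
  have key : ∀ x : V, ((c x).castLE hkk = i) ↔ (c x = ⟨i, hik⟩) := by
    intro x
    constructor
    · intro hx; apply Fin.ext
      have := congrArg Fin.val hx
      simpa using this
    · intro hx; apply Fin.ext
      have := congrArg Fin.val hx
      simpa using this
  revert hch
  apply List.Chain.imp
  intro a b hab
  exact ⟨(key a).1 hab.1, (key b).1 hab.2.1, hab.2.2⟩
lemma dichromLE_restrict {D : V → V → Prop} {S : Set V} {k : ℕ} (h : DichromLE D k) :
    DichromLE (subRel D S) k := by
  obtain ⟨c, hc⟩ := h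
  refine ⟨fun x => c x.1, fun i => ?_⟩
  exact isAcyclic_of_map (Subtype.val : S → V) Subtype.val_injective
    (fun a b hab => ⟨hab.1, hab.2.1, hab.2.2⟩) (hc i)

lemma dichromLE_univ_iff {D : V → V → Prop} {k : ℕ} :
    DichromLE (subRel D Set.univ) k ↔ DichromLE D k := by
  constructor
  · rintro ⟨c, hc⟩
    refine ⟨fun v => c ⟨v, trivial⟩, fun i => ?_⟩
    refine isAcyclic_of_map (fun v : V => (⟨v, trivial⟩ : (Set.univ : Set V)))
      (fun a b hab => congrArg Subtype.val hab) (fun a b hab => ⟨hab.1, hab.2.1, hab.2.2⟩) (hc i)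
  · exact dichromLE_restrict

lemma noLoop_of_dichromLE {D : V → V → Prop} {k : ℕ} (h : DichromLE D k) (v : V) : ¬ D v v := by
  intro hv
  obtain ⟨c, hc⟩ := h
  refine hc (c v) v [] (by simp) ?_
  simp only [List.nil_append]
  exact List.Chain.cons ⟨rfl, rfl, hv⟩ List.Chain.nil

lemma dichromLE_of_noLoops [Fintype V] (D : V → V → Prop) (h : ∀ v, ¬ D v v) :
    DichromLE D (Fintype.card V) := by
  refine ⟨Fintype.equivFin V, fun i => ?_⟩
  intro v l hnd hch
  cases hl : (l ++ [v]) with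
  | nil => simp at hl
  | cons x t =>
    rw [hl] at hch; simp only [List.Chain, List.chain_cons] at hch
    obtain ⟨⟨hv1, hx1, hD⟩, -⟩ := hch
    have : v = x := (Fintype.equivFin V).injective (hv1.trans hx1.symm)
    exact h v (this ▸ hD)

lemma dichromLE_empty {D : V → V → Prop} (k : ℕ) : DichromLE (subRel D (∅ : Set V)) k := by
  refine ⟨fun x => absurd x.2 (Set.notMem_empty _), fun i => ?_⟩
  intro v _ _ _
  exact absurd v.2 (Set.notMem_empty _)

lemma dichromLE_singleton {D : V → V → Prop} (v : V) (h : ¬ D v v) :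
    DichromLE (subRel D ({v} : Set V)) 1 := by
  refine ⟨fun _ => 0, fun i => ?_⟩
  intro w l hnd hch
  cases hl : (l ++ [w]) with
  | nil => simp at hl
  | cons x t =>
    rw [hl] at hch; simp only [List.Chain, List.chain_cons] at hch
    obtain ⟨⟨-, -, hD⟩, -⟩ := hch
    have hw : w.1 = v := w.2
    have hx : x.1 = v := x.2
    have hD' : D w.1 x.1 := hD
    rw [hw, hx] at hD'
    exact h hD'

lemma dichromLE_union {D : V → V → Prop} {S₁ S₂ : Set V}
    {k₁ k₂ : ℕ}
    (h₁ : DichromLE (subRel D S₁) k₁) (h₂ : DichromLE (subRel D S₂) k₂) :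
    DichromLE (subRel D (S₁ ∪ S₂)) (k₁ + k₂) := by
  obtain ⟨c₁, hc₁⟩ := h₁
  obtain ⟨c₂, hc₂⟩ := h₂
  refine ⟨fun x => if hx : x.1 ∈ S₁ then (c₁ ⟨x.1, hx⟩).castAdd k₂
    else (c₂ ⟨x.1, x.2.resolve_left hx⟩).natAdd k₁, fun i => ?_⟩
  by_cases hik : (i : ℕ) < k₁
  · -- class lies in S₁
    set cls := {x : (S₁ ∪ S₂ : Set V) | (if hx : x.1 ∈ S₁ then (c₁ ⟨x.1, hx⟩).castAdd k₂
      else (c₂ ⟨x.1, x.2.resolve_left hx⟩).natAdd k₁) = i} with hcls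
    have hmem1 : ∀ x : (S₁ ∪ S₂ : Set V), x ∈ cls → x.1 ∈ S₁ := by
      intro x hx
      by_contra hxn
      have : (c₂ ⟨x.1, x.2.resolve_left hxn⟩).natAdd k₁ = i := by
        simpa [hcls, dif_neg hxn] using hx
      have hval : k₁ + ((c₂ ⟨x.1, x.2.resolve_left hxn⟩ : Fin k₂) : ℕ) = (i : ℕ) :=
        congrArg Fin.val this
      omega
    have key : ∀ (x : (S₁ ∪ S₂ : Set V)) (hx1 : x.1 ∈ S₁), x ∈ cls →
        c₁ ⟨x.1, hx1⟩ = ⟨(i : ℕ), hik⟩ := by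
      intro x hx1 hx
      have : (c₁ ⟨x.1, hx1⟩).castAdd k₂ = i := by
        simpa [hcls, dif_pos hx1] using hx
      apply Fin.ext
      exact (congrArg Fin.val this : ((c₁ ⟨x.1, hx1⟩ : Fin k₁) : ℕ) = (i : ℕ))
    refine isAcyclic_pull (P := fun x : (S₁ ∪ S₂ : Set V) => x.1 ∈ S₁)
      (R' := fun a b => (⟨a.1.1, a.2⟩ : S₁) ∈ {y : S₁ | c₁ y = ⟨(i : ℕ), hik⟩} ∧
        (⟨b.1.1, b.2⟩ : S₁) ∈ {y : S₁ | c₁ y = ⟨(i : ℕ), hik⟩} ∧ D a.1.1 b.1.1)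
      (fun a b hab => ⟨hmem1 a hab.1, hmem1 b hab.2.1⟩)
      (fun a b ha hb hab => ⟨key a ha hab.1, key b hb hab.2.1, hab.2.2⟩)
      ?_
    refine isAcyclic_of_map (fun x : {x : (S₁ ∪ S₂ : Set V) // x.1 ∈ S₁} => (⟨x.1.1, x.2⟩ : S₁))
      (fun a b hab => by
        apply Subtype.ext; apply Subtype.ext
        have : ((⟨a.1.1, _⟩ : S₁) : V) = ((⟨b.1.1, _⟩ : S₁) : V) := congrArg Subtype.val hab
        exact this)
      (fun a b hab => ⟨hab.1, hab.2.1, hab.2.2⟩) (hc₁ ⟨(i : ℕ), hik⟩)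
  · -- class lies in S₂
    have hik2 : (i : ℕ) - k₁ < k₂ := by have := i.2; omega
    set cls := {x : (S₁ ∪ S₂ : Set V) | (if hx : x.1 ∈ S₁ then (c₁ ⟨x.1, hx⟩).castAdd k₂
      else (c₂ ⟨x.1, x.2.resolve_left hx⟩).natAdd k₁) = i} with hcls
    have hmem2 : ∀ x : (S₁ ∪ S₂ : Set V), x ∈ cls → x.1 ∉ S₁ := by
      intro x hx hx1
      have : (c₁ ⟨x.1, hx1⟩).castAdd k₂ = i := by
        simpa [hcls, dif_pos hx1] using hx
      have hval : ((c₁ ⟨x.1, hx1⟩ : Fin k₁) : ℕ) = (i : ℕ) := congrArg Fin.val this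
      have h2 := (c₁ ⟨x.1, hx1⟩).2
      omega
    have key : ∀ (x : (S₁ ∪ S₂ : Set V)) (hx1 : x.1 ∉ S₁), x ∈ cls →
        c₂ ⟨x.1, x.2.resolve_left hx1⟩ = ⟨(i : ℕ) - k₁, hik2⟩ := by
      intro x hx1 hx
      have : (c₂ ⟨x.1, x.2.resolve_left hx1⟩).natAdd k₁ = i := by
        simpa [hcls, dif_neg hx1] using hx
      apply Fin.ext
      have hval : k₁ + ((c₂ ⟨x.1, x.2.resolve_left hx1⟩ : Fin k₂) : ℕ) = (i : ℕ) :=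
        congrArg Fin.val this
      show ((c₂ ⟨x.1, x.2.resolve_left hx1⟩ : Fin k₂) : ℕ) = (i : ℕ) - k₁
      omega
    refine isAcyclic_pull (P := fun x : (S₁ ∪ S₂ : Set V) => x.1 ∉ S₁)
      (R' := fun a b => (⟨a.1.1, a.1.2.resolve_left a.2⟩ : S₂) ∈
          {y : S₂ | c₂ y = ⟨(i : ℕ) - k₁, hik2⟩} ∧
        (⟨b.1.1, b.1.2.resolve_left b.2⟩ : S₂) ∈
          {y : S₂ | c₂ y = ⟨(i : ℕ) - k₁, hik2⟩} ∧ D a.1.1 b.1.1)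
      (fun a b hab => ⟨hmem2 a hab.1, hmem2 b hab.2.1⟩)
      (fun a b ha hb hab => ⟨key a ha hab.1, key b hb hab.2.1, hab.2.2⟩)
      ?_
    refine isAcyclic_of_map
      (fun x : {x : (S₁ ∪ S₂ : Set V) // x.1 ∉ S₁} => (⟨x.1.1, x.1.2.resolve_left x.2⟩ : S₂))
      (fun a b hab => by
        apply Subtype.ext; apply Subtype.ext
        have : ((⟨a.1.1, _⟩ : S₂) : V) = ((⟨b.1.1, _⟩ : S₂) : V) := congrArg Subtype.val hab
        exact this)
      (fun a b hab => ⟨hab.1, hab.2.1, hab.2.2⟩) (hc₂ ⟨(i : ℕ) - k₁, hik2⟩)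
lemma split_dichromLE [Fintype V] (D : V → V → Prop) (hNL : ∀ v, ¬ D v v) (a b : ℕ)
    (h : ¬ DichromLE D (a + b + 1)) :
    ∃ S : Set V, ¬ DichromLE (subRel D S) a ∧ ¬ DichromLE (subRel D Sᶜ) b := by
  classical
  set fam : Finset V → Prop := fun s => ¬ DichromLE (subRel D (↑s : Set V)) a with hfam
  have huniv : fam Finset.univ := by
    intro hle
    rw [Finset.coe_univ] at hle
    exact h (dichromLE_mono (by omega) (dichromLE_univ_iff.1 hle))
  have hT : (Finset.univ.filter fam).Nonempty :=
    ⟨Finset.univ, by simpa using huniv⟩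
  obtain ⟨s, hs, hmin⟩ := Finset.exists_min_image (Finset.univ.filter fam) Finset.card hT
  rw [Finset.mem_filter] at hs
  have hsa : ¬ DichromLE (subRel D (↑s : Set V)) a := hs.2
  -- s is nonempty
  have hsne : s.Nonempty := by
    rcases Finset.eq_empty_or_nonempty s with rfl | hne
    · exact absurd (by rw [Finset.coe_empty]; exact dichromLE_empty a) hsa
    · exact hne
  obtain ⟨v, hv⟩ := hsne
  -- the erase is colorable with a colors
  have herase : DichromLE (subRel D (↑(s.erase v) : Set V)) a := by
    by_contra hc
    have hmem : s.erase v ∈ Finset.univ.filter fam := by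
      simp only [Finset.mem_filter, Finset.mem_univ, true_and]; exact hc
    have := hmin _ hmem
    have hcard : (s.erase v).card < s.card := Finset.card_erase_lt_of_mem hv
    omega
  -- so s is colorable with a+1 colors
  have hsa1 : DichromLE (subRel D (↑s : Set V)) (a + 1) := by
    have hun := dichromLE_union herase (dichromLE_singleton v (hNL v))
    have hset : (↑(s.erase v) : Set V) ∪ {v} = (↑s : Set V) := by
      ext x
      simp only [Set.mem_union, Finset.coe_erase, Set.mem_diff, Set.mem_singleton_iff,
        Finset.mem_coe]
      constructor
      · rintro (⟨hx, -⟩ | rfl)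
        · exact hx
        · exact hv
      · intro hx
        by_cases hxv : x = v
        · exact Or.inr hxv
        · exact Or.inl ⟨hx, hxv⟩
    rwa [hset] at hun
  refine ⟨(↑s : Set V), hsa, fun hb => ?_⟩
  have hun := dichromLE_union hsa1 hb
  rw [Set.union_compl_self] at hun
  have := dichromLE_univ_iff.1 hun
  exact h (dichromLE_mono (by omega) this)

lemma le_dichrom_of {D : V → V → Prop} {m : ℕ}
    (hne : ∃ N, DichromLE D N) (h : ∀ k, k < m → ¬ DichromLE D k) : m ≤ dichrom D := by
  by_contra hlt
  push_neg at hlt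
  exact h _ hlt (Nat.sInf_mem hne)

lemma not_dichromLE_of_le {D : V → V → Prop} {m k : ℕ}
    (h : m ≤ dichrom D) (hk : k < m) : ¬ DichromLE D k := by
  intro hD
  have : dichrom D ≤ k := Nat.sInf_le hD
  omega
lemma containsSubdivision_lift {U' : Type} {F : U' → U' → Prop} {D : V → V → Prop} {S : Set V}
    (h : ContainsSubdivision F (subRel D S)) :
    ∃ (f : U' → V) (p : ∀ u v, F u v → List V),
      Function.Injective f ∧ (∀ u, f u ∈ S) ∧
      (∀ u v (h : F u v), ∀ w ∈ p u v h, w ∈ S) ∧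
      (∀ u v (h : F u v), List.Chain D (f u) (p u v h ++ [f v])) ∧
      (∀ u v (h : F u v), (f u :: (p u v h ++ [f v])).Nodup) ∧
      (∀ u v (h : F u v), ∀ w ∈ p u v h, ∀ x : U', w ≠ f x) ∧
      (∀ u v (h : F u v), ∀ u' v' (h' : F u' v'), (u, v) ≠ (u', v') →
        ∀ w ∈ p u v h, w ∉ p u' v' h') := by
  obtain ⟨f₀, p₀, hinj, hch, hnd, hbr, hdis⟩ := h
  refine ⟨fun u => (f₀ u).1, fun u v h => (p₀ u v h).map Subtype.val,
    fun a b hab => hinj (Subtype.ext hab), fun u => (f₀ u).2, ?_, ?_, ?_, ?_, ?_⟩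
  · intro u v h w hw
    rw [List.mem_map] at hw
    obtain ⟨y, -, rfl⟩ := hw
    exact y.2
  · intro u v h
    have := List.isChain_map_of_isChain (S := D) Subtype.val
      (fun a b hab => hab) (hch u v h)
    simpa [List.Chain] using this
  · intro u v h
    have := (hnd u v h).map Subtype.val_injective
    simpa using this
  · intro u v h w hw x heq
    rw [List.mem_map] at hw
    obtain ⟨y, hy, rfl⟩ := hw
    exact hbr u v h y hy x (Subtype.ext heq)
  · intro u v h u' v' h' hne w hw hw'
    rw [List.mem_map] at hw hw'
    obtain ⟨y, hy, rfl⟩ := hw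
    obtain ⟨y', hy', heq⟩ := hw'
    have : y' = y := Subtype.ext heq
    subst this
    exact hdis u v h u' v' h' hne y' hy hy'

lemma glue_subdivision {U₁ U₂ : Type} {F₁ : U₁ → U₁ → Prop} {F₂ : U₂ → U₂ → Prop}
    {D : V → V → Prop} {S : Set V}
    (h₁ : ContainsSubdivision F₁ (subRel D S)) (h₂ : ContainsSubdivision F₂ (subRel D Sᶜ)) :
    ContainsSubdivision (disjUnion F₁ F₂) D := by
  obtain ⟨f₁, p₁, hinj₁, hfS₁, hpS₁, hch₁, hnd₁, hbr₁, hdis₁⟩ := containsSubdivision_lift h₁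
  obtain ⟨f₂, p₂, hinj₂, hfS₂, hpS₂, hch₂, hnd₂, hbr₂, hdis₂⟩ := containsSubdivision_lift h₂
  refine ⟨Sum.elim f₁ f₂,
    (fun u v => match u, v with
      | .inl a, .inl b => fun h => p₁ a b h
      | .inr a, .inr b => fun h => p₂ a b h
      | .inl _, .inr _ => fun h => nomatch h
      | .inr _, .inl _ => fun h => nomatch h), ?_, ?_, ?_, ?_, ?_⟩
  · rintro (a | a) (b | b) hab
    · exact congrArg Sum.inl (hinj₁ hab)
    · exfalso
      have hab' : f₁ a = f₂ b := hab
      apply hfS₂ b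
      rw [← hab']
      exact hfS₁ a
    · exfalso
      have hab' : f₂ a = f₁ b := hab
      apply hfS₂ a
      rw [hab']
      exact hfS₁ b
    · exact congrArg Sum.inr (hinj₂ hab)
  · rintro (a | a) (b | b) h
    · exact hch₁ a b h
    · exact h.elim
    · exact h.elim
    · exact hch₂ a b h
  · rintro (a | a) (b | b) h
    · exact hnd₁ a b h
    · exact h.elim
    · exact h.elim
    · exact hnd₂ a b h
  · rintro (a | a) (b | b) h w hw (x | x) heq
    · exact hbr₁ a b h w hw x heq
    · have heq' : w = f₂ x := heq
      apply hfS₂ x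
      rw [← heq']
      exact hpS₁ a b h w hw
    · exact h.elim
    · exact h.elim
    · exact h.elim
    · exact h.elim
    · have heq' : w = f₁ x := heq
      apply hpS₂ a b h w hw
      rw [heq']
      exact hfS₁ x
    · exact hbr₂ a b h w hw x heq
  · rintro (a | a) (b | b) h (a' | a') (b' | b') h' hne w hw hw'
    · refine hdis₁ a b h a' b' h' ?_ w hw hw'
      intro hp
      apply hne
      rw [Prod.mk.injEq] at hp
      rw [hp.1, hp.2]
    · exact h'.elim
    · exact h'.elim
    · exact (hpS₂ a' b' h' w hw') (hpS₁ a b h w hw)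
    · exact h.elim
    · exact h.elim
    · exact h.elim
    · exact h.elim
    · exact h.elim
    · exact h.elim
    · exact h.elim
    · exact h.elim
    · exact (hpS₂ a b h w hw) (hpS₁ a' b' h' w hw')
    · exact h'.elim
    · exact h'.elim
    · refine hdis₂ a b h a' b' h' ?_ w hw hw'
      intro hp
      apply hne
      rw [Prod.mk.injEq] at hp
      rw [hp.1, hp.2]

lemma containsSubdivision_inl {U₁ U₂ : Type} {F₁ : U₁ → U₁ → Prop} {F₂ : U₂ → U₂ → Prop}
    {D : V → V → Prop} (h : ContainsSubdivision (disjUnion F₁ F₂) D) :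
    ContainsSubdivision F₁ D := by
  obtain ⟨f, p, hinj, hch, hnd, hbr, hdis⟩ := h
  refine ⟨fun u => f (.inl u), fun u v h => p (.inl u) (.inl v) h,
    fun a b hab => by injection hinj hab,
    fun u v h => hch (Sum.inl u) (Sum.inl v) h,
    fun u v h => hnd (Sum.inl u) (Sum.inl v) h,
    fun u v h w hw x => hbr (Sum.inl u) (Sum.inl v) h w hw (.inl x), ?_⟩
  intro u v h u' v' h' hne w hw
  refine hdis (Sum.inl u) (Sum.inl v) h (Sum.inl u') (Sum.inl v') h' ?_ w hw
  intro hp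
  apply hne
  rw [Prod.mk.injEq] at hp
  obtain ⟨h1, h2⟩ := hp
  injection h1 with h1
  injection h2 with h2
  rw [h1, h2]

lemma containsSubdivision_inr {U₁ U₂ : Type} {F₁ : U₁ → U₁ → Prop} {F₂ : U₂ → U₂ → Prop}
    {D : V → V → Prop} (h : ContainsSubdivision (disjUnion F₁ F₂) D) :
    ContainsSubdivision F₂ D := by
  obtain ⟨f, p, hinj, hch, hnd, hbr, hdis⟩ := h
  refine ⟨fun u => f (.inr u), fun u v h => p (.inr u) (.inr v) h,
    fun a b hab => by injection hinj hab,
    fun u v h => hch (Sum.inr u) (Sum.inr v) h,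
    fun u v h => hnd (Sum.inr u) (Sum.inr v) h,
    fun u v h w hw x => hbr (Sum.inr u) (Sum.inr v) h w hw (.inr x), ?_⟩
  intro u v h u' v' h' hne w hw
  refine hdis (Sum.inr u) (Sum.inr v) h (Sum.inr u') (Sum.inr v') h' ?_ w hw
  intro hp
  apply hne
  rw [Prod.mk.injEq] at hp
  obtain ⟨h1, h2⟩ := hp
  injection h1 with h1
  injection h2 with h2
  rw [h1, h2]

end MaderHelpers

theorem mader_disjUnion_le {U W : Type} [Fintype U] [Fintype W]
    (F₁ : U → U → Prop) (F₂ : W → W → Prop) :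
    mader (disjUnion F₁ F₂) ≤ mader F₁ + mader F₂ := by
  classical
  by_cases h₁ : {k | ∀ (V : Type) (_ : Fintype V) (D : V → V → Prop),
      k ≤ dichrom D → ContainsSubdivision F₁ D}.Nonempty
  swap
  · have hF : {k | ∀ (V : Type) (_ : Fintype V) (D : V → V → Prop),
        k ≤ dichrom D → ContainsSubdivision (disjUnion F₁ F₂) D} = ∅ := by
      rw [Set.eq_empty_iff_forall_notMem]
      intro k hk
      exact h₁ ⟨k, fun V inst D hD => containsSubdivision_inl (hk V inst D hD)⟩
    rw [mader, hF, Nat.sInf_empty]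
    omega
  by_cases h₂ : {k | ∀ (V : Type) (_ : Fintype V) (D : V → V → Prop),
      k ≤ dichrom D → ContainsSubdivision F₂ D}.Nonempty
  swap
  · have hF : {k | ∀ (V : Type) (_ : Fintype V) (D : V → V → Prop),
        k ≤ dichrom D → ContainsSubdivision (disjUnion F₁ F₂) D} = ∅ := by
      rw [Set.eq_empty_iff_forall_notMem]
      intro k hk
      exact h₂ ⟨k, fun V inst D hD => containsSubdivision_inr (hk V inst D hD)⟩
    rw [mader, hF, Nat.sInf_empty]
    omega
  have hm₁ : mader F₁ ∈ {k | ∀ (V : Type) (_ : Fintype V) (D : V → V → Prop),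
      k ≤ dichrom D → ContainsSubdivision F₁ D} := Nat.sInf_mem h₁
  have hm₂ : mader F₂ ∈ {k | ∀ (V : Type) (_ : Fintype V) (D : V → V → Prop),
      k ≤ dichrom D → ContainsSubdivision F₂ D} := Nat.sInf_mem h₂
  refine Nat.sInf_le ?_
  intro V' instV' D hd
  haveI := instV'
  have key : ∃ S : Set V', mader F₁ ≤ dichrom (subRel D S) ∧
      mader F₂ ≤ dichrom (subRel D Sᶜ) := by
    by_cases h0 : mader F₁ + mader F₂ = 0
    · refine ⟨∅, ?_, ?_⟩
      · rw [show mader F₁ = 0 by omega]; exact Nat.zero_le _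
      · rw [show mader F₂ = 0 by omega]; exact Nat.zero_le _
    · have hne : ∃ N, DichromLE D N := by
        by_contra hcon
        push_neg at hcon
        have hemp : {k | DichromLE D k} = ∅ := Set.eq_empty_iff_forall_notMem.2 hcon
        have hdz : dichrom D = 0 := by rw [dichrom, hemp, Nat.sInf_empty]
        omega
      obtain ⟨N, hN⟩ := hne
      have hNL : ∀ v, ¬ D v v := noLoop_of_dichromLE hN
      by_cases hm10 : mader F₁ = 0
      · refine ⟨∅, by rw [hm10]; exact Nat.zero_le _, ?_⟩
        rw [Set.compl_empty]
        refine le_dichrom_of ⟨N, dichromLE_restrict hN⟩ ?_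
        intro k hk hLE
        exact not_dichromLE_of_le hd (by omega) (dichromLE_univ_iff.1 hLE)
      by_cases hm20 : mader F₂ = 0
      · refine ⟨Set.univ, ?_, ?_⟩
        · refine le_dichrom_of ⟨N, dichromLE_restrict hN⟩ ?_
          intro k hk hLE
          exact not_dichromLE_of_le hd (by omega) (dichromLE_univ_iff.1 hLE)
        · rw [Set.compl_univ, hm20]; exact Nat.zero_le _
      · obtain ⟨S, hSa, hSb⟩ := split_dichromLE D hNL (mader F₁ - 1) (mader F₂ - 1)
          (by
            have hnot := not_dichromLE_of_le hd
              (show mader F₁ + mader F₂ - 1 < mader F₁ + mader F₂ by omega)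
            rwa [show mader F₁ - 1 + (mader F₂ - 1) + 1 = mader F₁ + mader F₂ - 1 by omega])
        refine ⟨S, ?_, ?_⟩
        · refine le_dichrom_of ⟨N, dichromLE_restrict hN⟩ ?_
          intro k hk hLE
          exact hSa (dichromLE_mono (by omega) hLE)
        · refine le_dichrom_of ⟨N, dichromLE_restrict hN⟩ ?_
          intro k hk hLE
          exact hSb (dichromLE_mono (by omega) hLE)
  obtain ⟨S, hS₁, hS₂⟩ := key
  haveI : Finite V' := Finite.of_fintype V'
  haveI : Fintype ↥S := Fintype.ofFinite _
  haveI : Fintype ↥(Sᶜ) := Fintype.ofFinite _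
  exact glue_subdivision (hm₁ ↥S inferInstance (subRel D S) hS₁)
    (hm₂ ↥(Sᶜ) inferInstance (subRel D Sᶜ) hS₂)
end

section
/- Let D be a digraph, x ∈ V(D), and (V₁, V₂, V₃) an acyclic 3-coloring of D − x. For i ∈ {1,2}, let B_i ⊆ V_i be the vertices in the strong component of x in D[{x} ∪ V_i], and let B_i¹ ∪ A_i be the set of vertices reachable from B_i in D without passing through any vertex of {x} ∪ B_{3−i} (with B_i¹ ⊆ V_i, A_i ⊆ V₃). Set B_i² = V_i \ (B_i¹ ∪ B_i) and E = V₃ \ (A₁ ∪ A₂). If A₁ ∩ A₂ = ∅, then the induced subdigraph D[B₁ ∪ B₁¹ ∪ A₂] is acyclic. -/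
private lemma chainA {V : Type} {R : V → V → Prop} :
    ∀ (l : List V) (v : V), List.Chain R v l → ∀ w ∈ l, Relation.ReflTransGen R v w := by
  intro l
  induction l with
  | nil => intro v _ w hw; exact absurd hw List.not_mem_nil
  | cons b t ih =>
    intro v h w hw
    simp only [List.Chain, List.isChain_cons_cons] at h
    rcases List.mem_cons.mp hw with rfl | hw
    · exact Relation.ReflTransGen.single h.1
    · exact Relation.ReflTransGen.head h.1 (ih b h.2 w hw)

private lemma chainB {V : Type} {R : V → V → Prop} :
    ∀ (l : List V) (v u : V), List.Chain R v (l ++ [u]) → ∀ w ∈ v :: l,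
      Relation.ReflTransGen R w u := by
  intro l
  induction l with
  | nil =>
    intro v u h w hw
    simp only [List.nil_append, List.Chain, List.isChain_cons_cons] at h
    rcases List.mem_cons.mp hw with rfl | hw
    · exact Relation.ReflTransGen.single h.1
    · exact absurd hw List.not_mem_nil
  | cons b t ih =>
    intro v u h w hw
    simp only [List.cons_append, List.Chain, List.isChain_cons_cons] at h
    rcases List.mem_cons.mp hw with rfl | hw
    · exact Relation.ReflTransGen.head h.1 (ih b u h.2 b (List.mem_cons_self (a := b) (l := t)))
    · exact ih b u h.2 w hw

private lemma chainP {V : Type} {R R' : V → V → Prop} {P : V → Prop}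
    (h : ∀ a b, R a b → P a → P b → R' a b) :
    ∀ (l : List V) (v : V), List.Chain R v l → (∀ w ∈ v :: l, P w) → List.Chain R' v l := by
  intro l
  induction l with
  | nil => intro v _ _; exact List.Chain.nil
  | cons b t ih =>
    intro v hc hP
    simp only [List.Chain, List.isChain_cons_cons] at hc ⊢
    refine ⟨h v b hc.1 (hP v (by simp)) (hP b (by simp)), ih b hc.2 ?_⟩
    intro w hw
    exact hP w (by simp at hw ⊢; tauto)

theorem part_acyclic_of_disjoint_reach {V : Type} (D : V → V → Prop) (x : V)
    (V₁ V₂ V₃ : Set V)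
    (hpart : V₁ ∪ V₂ ∪ V₃ = {x}ᶜ)
    (hd12 : Disjoint V₁ V₂) (hd13 : Disjoint V₁ V₃) (hd23 : Disjoint V₂ V₃)
    (hac1 : AcyclicOn D V₁) (hac2 : AcyclicOn D V₂) (hac3 : AcyclicOn D V₃)
    (B₁ B₂ B₁' A₁ A₂ : Set V)
    (hB₁ : B₁ = {v ∈ V₁ | Relation.ReflTransGen (restrictRel D ({x} ∪ V₁)) x v ∧
      Relation.ReflTransGen (restrictRel D ({x} ∪ V₁)) v x})
    (hB₂ : B₂ = {v ∈ V₂ | Relation.ReflTransGen (restrictRel D ({x} ∪ V₂)) x v ∧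
      Relation.ReflTransGen (restrictRel D ({x} ∪ V₂)) v x})
    (hB₁' : B₁' = {v ∈ V₁ | ∃ b ∈ B₁, Relation.ReflTransGen
      (fun p q => p ∉ ({x} ∪ B₂ : Set V) ∧ q ∉ ({x} ∪ B₂ : Set V) ∧ D p q) b v})
    (hA₁ : A₁ = {v ∈ V₃ | ∃ b ∈ B₁, Relation.ReflTransGen
      (fun p q => p ∉ ({x} ∪ B₂ : Set V) ∧ q ∉ ({x} ∪ B₂ : Set V) ∧ D p q) b v})
    (hA₂ : A₂ = {v ∈ V₃ | ∃ b ∈ B₂, Relation.ReflTransGen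
      (fun p q => p ∉ ({x} ∪ B₁ : Set V) ∧ q ∉ ({x} ∪ B₁ : Set V) ∧ D p q) b v})
    (hAA : A₁ ∩ A₂ = ∅) :
    AcyclicOn D (B₁ ∪ B₁' ∪ A₂) := by
  intro v l hnd hch
  set S : Set V := B₁ ∪ B₁' ∪ A₂ with hS
  set R' : V → V → Prop :=
    fun p q => p ∉ ({x} ∪ B₂ : Set V) ∧ q ∉ ({x} ∪ B₂ : Set V) ∧ D p q with hR'
  have hB1V1 : B₁ ⊆ V₁ := by rw [hB₁]; intro u hu; exact hu.1
  have hB1'V1 : B₁' ⊆ V₁ := by rw [hB₁']; intro u hu; exact hu.1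
  have hA2V3 : A₂ ⊆ V₃ := by rw [hA₂]; intro u hu; exact hu.1
  have hB2V2 : B₂ ⊆ V₂ := by rw [hB₂]; intro u hu; exact hu.1
  have hxn : x ∉ V₁ ∪ V₂ ∪ V₃ := by rw [hpart]; simp
  -- vertices of S avoid {x} ∪ B₂, and S ⊆ V₁ ∪ V₃
  have hS13 : ∀ s ∈ S, s ∈ V₁ ∨ s ∈ V₃ := by
    intro s hs
    rcases hs with (hs | hs) | hs
    · exact Or.inl (hB1V1 hs)
    · exact Or.inl (hB1'V1 hs)
    · exact Or.inr (hA2V3 hs)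
  have hSX : ∀ s ∈ S, s ∉ ({x} ∪ B₂ : Set V) := by
    intro s hs hsX
    rcases hS13 s hs with h13 | h13
    · rcases hsX with hx | hb2
      · rw [Set.mem_singleton_iff] at hx; subst hx
        exact hxn (Or.inl (Or.inl h13))
      · exact Set.disjoint_left.mp hd12 h13 (hB2V2 hb2)
    · rcases hsX with hx | hb2
      · rw [Set.mem_singleton_iff] at hx; subst hx
        exact hxn (Or.inr h13)
      · exact (Set.disjoint_left.mp hd23 (hB2V2 hb2)) h13
  -- all cycle vertices are in S
  have hvmemS : v ∈ S := by
    cases hl : l ++ [v] with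
    | nil => simp at hl
    | cons c t =>
      rw [hl] at hch; simp only [List.Chain, List.isChain_cons_cons] at hch
      exact hch.1.1
  have hvS : ∀ w ∈ v :: l, w ∈ S := by
    intro w hw
    rcases List.mem_cons.mp hw with heq | hw
    · rw [heq]; exact hvmemS
    · have := chainA (l ++ [v]) v hch w (by simp [hw])
      rcases Relation.ReflTransGen.cases_tail this with heq | ⟨c, _, hc⟩
      · rw [heq]; exact hvmemS
      · exact hc.2.1
  -- reachability along the cycle between any two cycle vertices
  have hreach : ∀ a ∈ v :: l, ∀ b ∈ v :: l,
      Relation.ReflTransGen (fun a b => a ∈ S ∧ b ∈ S ∧ D a b) a b := by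
    intro a ha b hb
    have hav : Relation.ReflTransGen (fun a b => a ∈ S ∧ b ∈ S ∧ D a b) a v :=
      chainB l v v hch a ha
    have hvb : Relation.ReflTransGen (fun a b => a ∈ S ∧ b ∈ S ∧ D a b) v b := by
      rcases List.mem_cons.mp hb with heq | hb
      · rw [heq]
      · exact chainA (l ++ [v]) v hch b (by simp [hb])
    exact hav.trans hvb
  by_cases hall3 : ∀ w ∈ v :: l, w ∈ V₃
  · refine hac3 v l hnd (chainP (P := fun w => w ∈ V₃) ?_ (l ++ [v]) v hch ?_)
    · intro a b hab ha hb; exact ⟨ha, hb, hab.2.2⟩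
    · intro w hw
      apply hall3
      simp at hw ⊢; tauto
  by_cases hall1 : ∀ w ∈ v :: l, w ∈ V₁
  · refine hac1 v l hnd (chainP (P := fun w => w ∈ V₁) ?_ (l ++ [v]) v hch ?_)
    · intro a b hab ha hb; exact ⟨ha, hb, hab.2.2⟩
    · intro w hw
      apply hall1
      simp at hw ⊢; tauto
  push_neg at hall3 hall1
  obtain ⟨a, haM, haV3⟩ := hall3
  obtain ⟨b, hbM, hbV1⟩ := hall1
  -- a is in B₁ ∪ B₁', b is in A₂
  have haB : a ∈ B₁ ∪ B₁' := by
    rcases hvS a haM with h | h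
    · exact h
    · exact absurd (hA2V3 h) haV3
  have hbA2 : b ∈ A₂ := by
    rcases hvS b hbM with h | h
    · rcases h with h | h
      · exact absurd (hB1V1 h) hbV1
      · exact absurd (hB1'V1 h) hbV1
    · exact h
  -- some b₀ ∈ B₁ reaches a avoiding {x} ∪ B₂
  have hb0 : ∃ b₀ ∈ B₁, Relation.ReflTransGen R' b₀ a := by
    rcases haB with h | h
    · exact ⟨a, h, Relation.ReflTransGen.refl⟩
    · rw [hB₁'] at h
      exact h.2
  obtain ⟨b₀, hb₀B, hb₀a⟩ := hb0
  -- the cycle path a → b avoids {x} ∪ B₂ as well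
  have hab : Relation.ReflTransGen R' a b := by
    refine Relation.ReflTransGen.mono ?_ _ _ (hreach a haM b hbM)
    intro p q hpq
    exact ⟨hSX p hpq.1, hSX q hpq.2.1, hpq.2.2⟩
  have hbA1 : b ∈ A₁ := by
    rw [hA₁]
    exact ⟨hA2V3 hbA2, b₀, hb₀B, hb₀a.trans hab⟩
  have : b ∈ A₁ ∩ A₂ := ⟨hbA1, hbA2⟩
  rw [hAA] at this
  exact this
end
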